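/- Let (φ_t)_{t ≥ 0} be a semiflow of analytic self-maps of the unit disc 𝔻 (i.e., φ_0 = id, φ_{t+s} = φ_t ∘ φ_s, and t ↦ φ_t(z) continuous for each z). Then each φ_t is injective on 𝔻. -/

import Mathlib

open Complex Metric Set
open Filter Topology
open scoped NNReal

/-- Each map of a semiflow of analytic self-maps of the unit disc is injective on the disc. -/
theorem stmt4 (φ : ℝ≥0 → ℂ → ℂ)
    (hanal : ∀ t, DifferentiableOn ℂ (φ t) (ball (0:ℂ) 1))
    (hmaps : ∀ t, Set.MapsTo (φ t) (ball (0:ℂ) 1) (ball (0:ℂ) 1))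
    (h0 : ∀ z ∈ ball (0:ℂ) 1, φ 0 z = z)
    (hadd : ∀ s t : ℝ≥0, ∀ z ∈ ball (0:ℂ) 1, φ (s + t) z = φ s (φ t z))
    (hcont : ∀ z ∈ ball (0:ℂ) 1, Continuous fun t : ℝ≥0 => φ t z) :
    ∀ t : ℝ≥0, Set.InjOn (φ t) (ball (0:ℂ) 1) := by
  intro t x hx y hy hxy
  by_contra hne
  set S : Set ℝ≥0 := {s | φ s x = φ s y} with hSdef
  have htS : t ∈ S := hxy
  have hSclosed : IsClosed S := isClosed_eq (hcont x hx) (hcont y hy)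
  set t0 := sInf S with ht0def
  have ht0S : t0 ∈ S := hSclosed.csInf_mem ⟨t, htS⟩ (OrderBot.bddBelow S)
  have ht0pos : 0 < t0 := by
    rcases eq_or_ne t0 0 with h | h
    · exfalso
      apply hne
      have hxy0 : φ t0 x = φ t0 y := ht0S
      rw [h, h0 x hx, h0 y hy] at hxy0
      exact hxy0
    · exact zero_lt_iff.mpr h
  set w := φ t0 x with hwdef
  have hwball : w ∈ ball (0:ℂ) 1 := hmaps t0 hx
  have hwlt : ‖w‖ < 1 := by simpa [mem_ball, dist_zero_right] using hwball
  set ρ : ℝ := (1 - ‖w‖) / 16 with hρdef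
  have hρpos : 0 < ρ := by
    have : 0 < 1 - ‖w‖ := by linarith
    positivity
  set K := closedBall w (3 * ρ) with hKdef
  have hKball : K ⊆ ball (0:ℂ) 1 := by
    intro z hz
    have h1 : dist z w ≤ 3 * ρ := mem_closedBall.1 hz
    have h2 : dist z 0 ≤ dist z w + dist w 0 := dist_triangle _ _ _
    rw [dist_zero_right] at h2
    rw [mem_ball, dist_zero_right]
    calc ‖z‖ = dist z 0 := (dist_zero_right z).symm
      _ ≤ dist z w + ‖w‖ := by rw [dist_zero_right] at h2 ⊢; exact h2
      _ ≤ 3 * ρ + ‖w‖ := by linarith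
      _ < 1 := by rw [hρdef]; linarith
  have hKsub : ∀ c ∈ K, ball c (8 * ρ) ⊆ ball (0:ℂ) 1 := by
    intro c hc u hu
    have h1 : dist u c < 8 * ρ := mem_ball.1 hu
    have h2 : dist c w ≤ 3 * ρ := mem_closedBall.1 hc
    rw [mem_ball, dist_zero_right]
    calc ‖u‖ = dist u 0 := (dist_zero_right u).symm
      _ ≤ dist u c + dist c w + dist w 0 := dist_triangle4 _ _ _ _
      _ < 8 * ρ + 3 * ρ + ‖w‖ := by rw [dist_zero_right]; linarith
      _ < 1 := by rw [hρdef]; linarith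
  -- uniform Lipschitz bound on K
  have hlip : ∀ s : ℝ≥0, ∀ c ∈ K, ∀ z ∈ K,
      dist (φ s z) (φ s c) ≤ 2 / (8 * ρ) * dist z c := by
    intro s c hc z hz
    have hcball : c ∈ ball c (8 * ρ) := mem_ball_self (by positivity)
    refine Complex.dist_le_div_mul_dist_of_mapsTo_ball
      ((hanal s).mono (hKsub c hc)) ?_ ?_
    · intro u hu
      have h1 : φ s u ∈ ball (0:ℂ) 1 := hmaps s (hKsub c hc hu)
      have h2 : φ s c ∈ ball (0:ℂ) 1 := hmaps s (hKsub c hc hcball)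
      rw [mem_ball, dist_zero_right] at h1 h2
      rw [mem_closedBall]; refine le_of_lt ?_
      calc dist (φ s u) (φ s c) ≤ ‖φ s u‖ + ‖φ s c‖ := by
            rw [dist_eq_norm]; exact norm_sub_le _ _
        _ < 2 := by linarith
    · rw [mem_ball]
      calc dist z c ≤ dist z w + dist w c := dist_triangle _ _ _
        _ ≤ 3 * ρ + 3 * ρ := by
            have := mem_closedBall.1 hz
            have h2 : dist w c ≤ 3 * ρ := by rw [dist_comm]; exact mem_closedBall.1 hc
            linarith
        _ < 8 * ρ := by linarith
  -- joint continuity on univ ×ˢ K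
  have hcontF : ContinuousOn (Function.uncurry φ) (univ ×ˢ K) := by
    rintro ⟨s₀, z₀⟩ ⟨-, hz₀⟩
    have hz₀b : z₀ ∈ ball (0:ℂ) 1 := hKball hz₀
    rw [ContinuousWithinAt]
    rw [tendsto_iff_dist_tendsto_zero]
    have hbdd : ∀ᶠ p : ℝ≥0 × ℂ in 𝓝[univ ×ˢ K] (s₀, z₀),
        dist (Function.uncurry φ p) (Function.uncurry φ (s₀, z₀)) ≤
          2 / (8 * ρ) * dist p.2 z₀ + dist (φ p.1 z₀) (φ s₀ z₀) := by
      filter_upwards [self_mem_nhdsWithin] with p hp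
      calc dist (φ p.1 p.2) (φ s₀ z₀)
          ≤ dist (φ p.1 p.2) (φ p.1 z₀) + dist (φ p.1 z₀) (φ s₀ z₀) := dist_triangle _ _ _
        _ ≤ 2 / (8 * ρ) * dist p.2 z₀ + dist (φ p.1 z₀) (φ s₀ z₀) := by
            have := hlip p.1 z₀ hz₀ p.2 hp.2
            linarith
    have hgcont : Continuous fun p : ℝ≥0 × ℂ =>
        2 / (8 * ρ) * dist p.2 z₀ + dist (φ p.1 z₀) (φ s₀ z₀) :=
      (continuous_const.mul (continuous_snd.dist continuous_const)).add
        (((hcont z₀ hz₀b).comp continuous_fst).dist continuous_const)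
    have hg : Tendsto (fun p : ℝ≥0 × ℂ =>
        2 / (8 * ρ) * dist p.2 z₀ + dist (φ p.1 z₀) (φ s₀ z₀))
        (𝓝[univ ×ˢ K] (s₀, z₀)) (𝓝 0) := by
      have h1 := hgcont.tendsto (s₀, z₀)
      simp only [dist_self, mul_zero, add_zero] at h1
      exact h1.mono_left nhdsWithin_le_nhds
    exact squeeze_zero' (Filter.Eventually.of_forall fun p => dist_nonneg) hbdd hg
  -- uniform convergence of φ s → id on K as s → 0
  have hIic : IsCompact (Iic (1:ℝ≥0)) := by
    have : Iic (1:ℝ≥0) = Icc 0 1 := by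
      ext u; simp
    rw [this]
    exact isCompact_Icc
  have hKcpt : IsCompact ((Iic (1:ℝ≥0)) ×ˢ K) := hIic.prod (isCompact_closedBall w _)
  have hUC : UniformContinuousOn (Function.uncurry φ) (Iic (1:ℝ≥0) ×ˢ K) :=
    hKcpt.uniformContinuousOn_of_continuous
      (hcontF.mono (Set.prod_mono_left (subset_univ _)))
  have hTU : TendstoUniformlyOn φ (φ 0) (𝓝[Iic (1:ℝ≥0)] 0) K :=
    hUC.tendstoUniformlyOn (mem_Iic.2 zero_le_one)
  rw [nhdsWithin_eq_nhds.2 (Iic_mem_nhds zero_lt_one)] at hTU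
  have hsmall : ∀ᶠ s : ℝ≥0 in 𝓝 0, ∀ z ∈ K, dist (φ s z) z < ρ / 2 := by
    have h1 := (Metric.tendstoUniformlyOn_iff.1 hTU) (ρ / 2) (by positivity)
    filter_upwards [h1] with s hs z hz
    have h2 := hs z hz
    rwa [h0 z (hKball hz), dist_comm] at h2
  -- eventual facts near 0⁺
  have E1 : ∀ᶠ s : ℝ≥0 in 𝓝[>] 0, s ≤ t0 :=
    ((eventually_le_nhds ht0pos)).filter_mono nhdsWithin_le_nhds
  have E2 : ∀ᶠ s : ℝ≥0 in 𝓝[>] 0, 0 < s :=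
    eventually_mem_nhdsWithin
  have E3 : ∀ᶠ s : ℝ≥0 in 𝓝[>] 0, ∀ z ∈ K, dist (φ s z) z < ρ / 2 :=
    hsmall.filter_mono nhdsWithin_le_nhds
  have haxcont : Tendsto (fun s : ℝ≥0 => φ (t0 - s) x) (𝓝 0) (𝓝 w) := by
    have h1 : Continuous fun s : ℝ≥0 => φ (t0 - s) x :=
      (hcont x hx).comp (continuous_const.sub continuous_id)
    have h2 := h1.tendsto 0
    simpa using h2
  have haycont : Tendsto (fun s : ℝ≥0 => φ (t0 - s) y) (𝓝 0) (𝓝 w) := by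
    have h1 : Continuous fun s : ℝ≥0 => φ (t0 - s) y :=
      (hcont y hy).comp (continuous_const.sub continuous_id)
    have h2 := h1.tendsto 0
    have hww : φ t0 y = w := ht0S.symm
    simpa [hww] using h2
  have E4 : ∀ᶠ s : ℝ≥0 in 𝓝[>] 0, dist (φ (t0 - s) x) w < ρ :=
    (Metric.tendsto_nhds.1 haxcont ρ hρpos).filter_mono nhdsWithin_le_nhds
  have E5 : ∀ᶠ s : ℝ≥0 in 𝓝[>] 0, dist (φ (t0 - s) y) w < ρ :=
    (Metric.tendsto_nhds.1 haycont ρ hρpos).filter_mono nhdsWithin_le_nhds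
  obtain ⟨s, hsle, hspos, hsm, hdax, hday⟩ :=
    (E1.and (E2.and (E3.and (E4.and E5)))).exists
  set a := φ (t0 - s) x with hadef
  set b := φ (t0 - s) y with hbdef
  have hab : a ≠ b := by
    intro h
    have hmem : t0 - s ∈ S := h
    have hle : t0 ≤ t0 - s := csInf_le (OrderBot.bddBelow S) hmem
    have hlt : t0 - s < t0 := tsub_lt_self ht0pos hspos
    exact absurd hle (not_le.2 hlt)
  have hphiab : φ s a = φ s b := by
    have h1 : φ s a = φ t0 x := by
      rw [hadef, ← hadd s (t0 - s) x hx, add_tsub_cancel_of_le hsle]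
    have h2 : φ s b = φ t0 y := by
      rw [hbdef, ← hadd s (t0 - s) y hy, add_tsub_cancel_of_le hsle]
    rw [h1, h2]
    exact ht0S
  have haK : a ∈ K := mem_closedBall.2 (by rw [hKdef] at *; nlinarith [hdax])
  have hbK : b ∈ K := mem_closedBall.2 (by nlinarith [hday])
  have hsub2 : ball a (2 * ρ) ⊆ K := by
    intro z hz
    have h1 : dist z a < 2 * ρ := mem_ball.1 hz
    have h2 : dist a w < ρ := hdax
    exact mem_closedBall.2 (by
      calc dist z w ≤ dist z a + dist a w := dist_triangle _ _ _
        _ ≤ 3 * ρ := by linarith)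
  set g : ℂ → ℂ := fun z => φ s z - z with hgdef
  have hgd : DifferentiableOn ℂ g (ball a (2 * ρ)) :=
    ((hanal s).mono (hsub2.trans hKball)).sub differentiableOn_id
  have hgm : MapsTo g (ball a (2 * ρ)) (ball (g a) ρ) := by
    intro z hz
    have h1 : dist (φ s z) z < ρ / 2 := hsm z (hsub2 hz)
    have h2 : dist (φ s a) a < ρ / 2 := hsm a haK
    have h3 : dist (g z) (g a) ≤ dist (φ s z) z + dist (φ s a) a := by
      simp only [hgdef, dist_eq_norm]
      exact norm_sub_le _ _
    rw [mem_ball]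
    linarith
  have hbmem : b ∈ ball a (2 * ρ) := by
    rw [mem_ball]
    calc dist b a ≤ dist b w + dist w a := dist_triangle _ _ _
      _ < 2 * ρ := by rw [dist_comm w a]; linarith
  have hkey := Complex.dist_le_div_mul_dist_of_mapsTo_ball hgd (hgm.mono_right ball_subset_closedBall) hbmem
  have hgba : dist (g b) (g a) = dist a b := by
    rw [hgdef]
    simp only [dist_eq_norm]
    rw [← hphiab]
    congr 1
    ring
  have hdiv : ρ / (2 * ρ) = 1 / 2 := by
    field_simp
  rw [hgba, hdiv, dist_comm b a] at hkey
  have hpos : 0 < dist a b := dist_pos.2 hab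
  linarith
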